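/- arXiv:2108.02775 — 2 statements merged into one kernel-verified Lean document; each statement's English description precedes it below -/
import Mathlib

section
/- In a finite binary tree, any two elements that are consecutive in the in-order traversal are comparable in the ancestor-descendant relation: one of them is an ancestor of the other. -/
/-- A finite binary tree with node values of type `α`. -/
inductive BTree (α : Type) : Type where
  | leaf : BTree α
  | node : BTree α → α → BTree α → BTree α

namespace BTree

variable {α : Type}

/-- In-order traversal: left subtree, root, right subtree. -/
def inorder : BTree α → List α
  | leaf => []
  | node l a r => inorder l ++ a :: inorder r

/-- `IsSubtree s t`: `s` is a subtree of `t` (possibly `t` itself). -/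
inductive IsSubtree : BTree α → BTree α → Prop
  | refl (t : BTree α) : IsSubtree t t
  | left {s l r : BTree α} {b : α} : IsSubtree s l → IsSubtree s (node l b r)
  | right {s l r : BTree α} {b : α} : IsSubtree s r → IsSubtree s (node l b r)

/-- `Ancestor t u v`: in the tree `t` (whose node values are assumed distinct),
the node with value `v` lies in the subtree rooted at the node with value `u`
(every node is an ancestor of itself). -/
def Ancestor (t : BTree α) (u v : α) : Prop :=
  ∃ s, IsSubtree s t ∧ (∃ l r, s = node l u r) ∧ v ∈ inorder s

end BTree

namespace BTree

theorem IsSubtree.trans {α : Type} {s t u : BTree α} (h1 : IsSubtree s t)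
    (h2 : IsSubtree t u) : IsSubtree s u := by
  induction h2 with
  | refl => exact h1
  | left _ ih => exact IsSubtree.left ih
  | right _ ih => exact IsSubtree.right ih

theorem Ancestor.lift {α : Type} {s t : BTree α} {u v : α}
    (hs : IsSubtree s t) (h : Ancestor s u v) : Ancestor t u v := by
  obtain ⟨w, hw, hn, hm⟩ := h
  exact ⟨w, hw.trans hs, hn, hm⟩

theorem key {α : Type} (t : BTree α) (i : ℕ) (h : i + 1 < (inorder t).length) :
    Ancestor t (inorder t)[i] (inorder t)[i+1] ∨
    Ancestor t (inorder t)[i+1] (inorder t)[i] := by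
  induction t generalizing i with
  | leaf => simp [inorder] at h
  | node l a r ihl ihr =>
    have hio : inorder (node l a r) = inorder l ++ a :: inorder r := rfl
    set L := inorder l with hL
    set R := inorder r with hR
    have hlen : (inorder (node l a r)).length = L.length + (R.length + 1) := by
      rw [hio]; simp
    rcases lt_trichotomy (i + 1) L.length with h1 | h1 | h1
    · -- both in L
      have hi : i < L.length := Nat.lt_of_succ_lt h1
      have e1 : (inorder (node l a r))[i]'(Nat.lt_of_succ_lt h) = L[i] := by
        rw [List.getElem_of_eq hio, List.getElem_append_left hi]
      have e2 : (inorder (node l a r))[i+1]'h = L[i+1] := by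
        rw [List.getElem_of_eq hio, List.getElem_append_left h1]
      rw [e1, e2]
      rcases ihl i h1 with hc | hc
      · exact Or.inl (hc.lift (IsSubtree.left (IsSubtree.refl l)))
      · exact Or.inr (hc.lift (IsSubtree.left (IsSubtree.refl l)))
    · -- i+1 = |L|, so v = a, u = L[i]
      have hi : i < L.length := by omega
      have e1 : (inorder (node l a r))[i]'(Nat.lt_of_succ_lt h) = L[i] := by
        rw [List.getElem_of_eq hio, List.getElem_append_left hi]
      have e2 : (inorder (node l a r))[i+1]'h = a := by
        rw [List.getElem_of_eq hio, List.getElem_append_right (by omega)]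
        have : i + 1 - L.length = 0 := by omega
        simp [this]
      rw [e1, e2]
      refine Or.inr ⟨node l a r, IsSubtree.refl _, ⟨l, r, rfl⟩, ?_⟩
      rw [hio]
      exact List.mem_append_left _ (List.getElem_mem hi)
    · have hle : L.length ≤ i := by omega
      rcases Nat.eq_or_lt_of_le hle with h2 | h2
      · -- i = |L|: u = a, v = R[0]
        have e1 : (inorder (node l a r))[i]'(Nat.lt_of_succ_lt h) = a := by
          rw [List.getElem_of_eq hio, List.getElem_append_right (by omega)]
          have : i - L.length = 0 := by omega
          simp [this]
        have hr0 : 0 < R.length := by rw [hlen] at h; omega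
        have e2 : (inorder (node l a r))[i+1]'h = R[0] := by
          rw [List.getElem_of_eq hio, List.getElem_append_right (by omega)]
          have : i + 1 - L.length = 1 := by omega
          simp [this]
        rw [e1, e2]
        refine Or.inl ⟨node l a r, IsSubtree.refl _, ⟨l, r, rfl⟩, ?_⟩
        rw [hio]
        exact List.mem_append_right _ (List.mem_cons_of_mem _ (List.getElem_mem hr0))
      · -- both in R
        set j := i - L.length - 1 with hj
        have hjr : j + 1 < R.length := by rw [hlen] at h; omega
        have e1 : (inorder (node l a r))[i]'(Nat.lt_of_succ_lt h) = R[j] := by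
          rw [List.getElem_of_eq hio, List.getElem_append_right (by omega)]
          have : i - L.length = j + 1 := by omega
          simp [this]
        have e2 : (inorder (node l a r))[i+1]'h = R[j+1] := by
          rw [List.getElem_of_eq hio, List.getElem_append_right (by omega)]
          have : i + 1 - L.length = j + 2 := by omega
          simp [this]
        rw [e1, e2]
        rcases ihr j hjr with hc | hc
        · exact Or.inl (hc.lift (IsSubtree.right (IsSubtree.refl r)))
        · exact Or.inr (hc.lift (IsSubtree.right (IsSubtree.refl r)))

end BTree

open BTree in
/-- Any two elements that are consecutive in the in-order traversal of a finite
binary tree (with distinct node values) are comparable in the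
ancestor-descendant relation: one is a proper ancestor of the other. -/
theorem inorder_consecutive_ancestor {α : Type} (t : BTree α)
    (hnd : (inorder t).Nodup) (i : ℕ) (h : i + 1 < (inorder t).length)
    (u v : α)
    (hu : (inorder t).get ⟨i, Nat.lt_of_succ_lt h⟩ = u)
    (hv : (inorder t).get ⟨i + 1, h⟩ = v) :
    (Ancestor t u v ∧ u ≠ v) ∨ (Ancestor t v u ∧ u ≠ v) := by
  have hne : u ≠ v := by
    intro he
    rw [← hu, ← hv, List.get_eq_getElem, List.get_eq_getElem] at he
    have := (hnd.get_inj_iff (i := ⟨i, Nat.lt_of_succ_lt h⟩) (j := ⟨i+1, h⟩)).mp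
      (by simpa using he)
    simp at this
  subst hu hv
  rcases BTree.key t i h with hc | hc
  · exact Or.inl ⟨by simpa using hc, hne⟩
  · exact Or.inr ⟨by simpa using hc, hne⟩
end

section
/- In the binary tree built recursively from a sequence with distinct priorities by taking the minimum-priority element as the root, a node u is a proper ancestor of a node v if and only if p(u) < p(v) and p(u) is less than the priority of every element strictly between u and v in the sequence. -/
namespace BTree

variable {α : Type}

/-- `Built p s t` holds iff `t` is the binary tree recursively constructed from
the sequence `s` by choosing the (unique) minimum-priority element as the root
and building the left and right subtrees from the subsequences to its left and
right. -/
inductive Built (p : α → ℕ) : List α → BTree α → Prop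
  | nil : Built p [] BTree.leaf
  | node {l r : List α} {tl tr : BTree α} {a : α} :
      Built p l tl → Built p r tr → (∀ x ∈ l ++ r, p a < p x) →
      Built p (l ++ a :: r) (BTree.node tl a tr)

end BTree

namespace BTree
variable {α : Type}

theorem sublist_of_isSubtree {s t : BTree α} (h : IsSubtree s t) :
    s.inorder.Sublist t.inorder := by
  induction h with
  | refl => exact List.Sublist.refl _
  | left h ih =>
      exact ih.trans (by simp [inorder])
  | right h ih =>
      refine ih.trans ?_
      simp only [inorder]
      exact ((List.sublist_cons_self _ _).trans (List.sublist_append_right _ _))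

theorem mem_right_of_ancestor {t : BTree α} {u v : α} (h : Ancestor t u v) :
    v ∈ t.inorder := by
  obtain ⟨s, hs, _, hv⟩ := h
  exact (sublist_of_isSubtree hs).mem hv

theorem mem_left_of_ancestor {t : BTree α} {u v : α} (h : Ancestor t u v) :
    u ∈ t.inorder := by
  obtain ⟨s, hs, ⟨l, r, rfl⟩, _⟩ := h
  exact (sublist_of_isSubtree hs).mem (by simp [inorder])

theorem built_inorder {p : α → ℕ} {s : List α} {t : BTree α} (h : Built p s t) :
    t.inorder = s := by
  induction h with
  | nil => rfl
  | node _ _ _ ihl ihr => simp [inorder, ihl, ihr]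

theorem ancestor_node_iff {tl tr : BTree α} {a u v : α} :
    Ancestor (node tl a tr) u v ↔
      (u = a ∧ v ∈ inorder (node tl a tr)) ∨ Ancestor tl u v ∨ Ancestor tr u v := by
  constructor
  · rintro ⟨s, hs, ⟨l', r', rfl⟩, hv⟩
    cases hs with
    | refl => exact Or.inl ⟨rfl, hv⟩
    | left h => exact Or.inr (Or.inl ⟨_, h, ⟨_, _, rfl⟩, hv⟩)
    | right h => exact Or.inr (Or.inr ⟨_, h, ⟨_, _, rfl⟩, hv⟩)
  · rintro (⟨rfl, hv⟩ | ⟨s, hs, hn, hv⟩ | ⟨s, hs, hn, hv⟩)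
    · exact ⟨node tl u tr, .refl _, ⟨tl, tr, rfl⟩, hv⟩
    · exact ⟨s, .left hs, hn, hv⟩
    · exact ⟨s, .right hs, hn, hv⟩

end BTree

theorem getElem_idx_congr {α : Type} {L : List α} {i j : ℕ} (h : i = j) {hi : i < L.length} :
    L[i] = L[j]'(h ▸ hi) := by subst h; rfl

namespace BTree
variable {α : Type}

theorem built_ancestor_iff (p : α → ℕ) {s : List α} {t : BTree α} (hb : Built p s t) :
    s.Pairwise (fun x y => p x ≠ p y) →
    ∀ (i j : ℕ) (hi : i < s.length) (hj : j < s.length), i ≠ j →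
    (Ancestor t s[i] s[j] ↔
      p s[i] < p s[j] ∧
        ∀ (k : ℕ) (hk : k < s.length), min i j < k → k < max i j → p s[i] < p s[k]) := by
  induction hb with
  | nil => intro _ i j hi; simp at hi
  | @node l r tl tr a hbl hbr hmin ihl ihr =>
    intro hd i j hi hj hij
    rw [List.pairwise_append] at hd
    obtain ⟨hdl, hdar, hcross⟩ := hd
    rw [List.pairwise_cons] at hdar
    obtain ⟨har', hdr⟩ := hdar
    have hlen : (l ++ a :: r).length = l.length + r.length + 1 := by simp; omega
    have hal : a ∉ l := fun hm => lt_irrefl _ (hmin a (List.mem_append_left _ hm))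
    have har : a ∉ r := fun hm => lt_irrefl _ (hmin a (List.mem_append_right _ hm))
    have hdisj : ∀ x, x ∈ l → x ∈ r → False := fun x hx hy =>
      hcross x hx x (List.mem_cons_of_mem a hy) rfl
    have hgl : ∀ (k : ℕ) (h : k < l.length) (h2 : k < (l ++ a :: r).length),
        (l ++ a :: r)[k] = l[k] := fun k h h2 => List.getElem_append_left h
    have hgm : ∀ (h2 : l.length < (l ++ a :: r).length),
        (l ++ a :: r)[l.length] = a := by
      intro h2
      rw [List.getElem_append_right (le_refl _)]
      simp
    have hgr : ∀ (k : ℕ) (h : l.length < k) (h2 : k < (l ++ a :: r).length),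
        (l ++ a :: r)[k] = r[k - l.length - 1]'(by omega) := by
      intro k h h2
      rw [List.getElem_append_right (by omega)]
      rw [getElem_idx_congr (show k - l.length = (k - l.length - 1) + 1 by omega)]
      rw [List.getElem_cons_succ]
    have hmem_ne : ∀ (k : ℕ) (hk : k < (l ++ a :: r).length), k ≠ l.length →
        (l ++ a :: r)[k] ∈ l ++ r := by
      intro k hk hkn
      rcases Nat.lt_or_ge k l.length with h | h
      · rw [hgl k h hk]; exact List.mem_append_left _ (List.getElem_mem h)
      · rw [hgr k (by omega) hk]
        exact List.mem_append_right _ (List.getElem_mem (by omega))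
    have hinor : inorder (node tl a tr) = l ++ a :: r := by
      simp [inorder, built_inorder hbl, built_inorder hbr]
    rcases Nat.lt_trichotomy i l.length with hi_lt | hi_eq | hi_gt
    · rcases Nat.lt_trichotomy j l.length with hj_lt | hj_eq | hj_gt
      · -- both in l
        rw [hgl i hi_lt hi, hgl j hj_lt hj]
        have hiff : Ancestor (node tl a tr) (l[i]'hi_lt) (l[j]'hj_lt) ↔
            Ancestor tl l[i] l[j] := by
          rw [ancestor_node_iff]
          constructor
          · rintro (⟨he, _⟩ | h | h)
            · exact absurd (he ▸ List.getElem_mem hi_lt) hal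
            · exact h
            · exact absurd (mem_left_of_ancestor h)
                (fun hm => hdisj _ (List.getElem_mem hi_lt) (by rwa [built_inorder hbr] at hm))
          · exact fun h => Or.inr (Or.inl h)
        rw [hiff, ihl hdl i j hi_lt hj_lt hij]
        refine and_congr_right fun _ => ⟨fun H k hk h1 h2 => ?_, fun H k hk h1 h2 => ?_⟩
        · have hkl : k < l.length := by omega
          rw [hgl k hkl hk]
          exact H k hkl h1 h2
        · have := H k (by omega) h1 h2
          rwa [hgl k hk (by omega)] at this
      · -- i in l, j = a
        subst hj_eq
        rw [hgm hj]
        have hui : (l ++ a :: r)[i] ∈ l ++ r := hmem_ne i hi (by omega)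
        constructor
        · intro hA
          exfalso
          rcases ancestor_node_iff.mp hA with ⟨he, _⟩ | h | h
          · exact absurd (he ▸ hui) (by simp [hal, har])
          · exact hal (by have := mem_right_of_ancestor h; rwa [built_inorder hbl] at this)
          · exact har (by have := mem_right_of_ancestor h; rwa [built_inorder hbr] at this)
        · intro hR
          exact absurd hR.1 (not_lt.mpr (le_of_lt (hmin _ hui)))
      · -- i in l, j in r : mixed
        have hui : (l ++ a :: r)[i] = l[i]'hi_lt := hgl i hi_lt hi
        have hvj : (l ++ a :: r)[j] = r[j - l.length - 1]'(by omega) := hgr j hj_gt hj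
        constructor
        · intro hA
          exfalso
          rcases ancestor_node_iff.mp hA with ⟨he, _⟩ | h | h
          · exact hal (he ▸ hui ▸ (hui.symm ▸ List.getElem_mem hi_lt))
          · have := mem_right_of_ancestor h
            rw [built_inorder hbl] at this
            exact hdisj _ this (hvj ▸ List.getElem_mem (by omega))
          · have := mem_left_of_ancestor h
            rw [built_inorder hbr] at this
            exact hdisj _ (hui ▸ List.getElem_mem hi_lt) this
        · intro hR
          exfalso
          have h1 := hR.2 l.length (by omega) (by omega) (by omega)
          rw [hgm (by omega)] at h1
          have h2 := hmin _ (hmem_ne i hi (by omega))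
          omega
    · -- i = a
      subst hi_eq
      rw [hgm hi]
      have hvj : (l ++ a :: r)[j] ∈ l ++ r := hmem_ne j hj (by omega)
      constructor
      · intro _
        refine ⟨hmin _ hvj, fun k hk h1 h2 => ?_⟩
        have hkn : k ≠ l.length := by omega
        exact hmin _ (hmem_ne k hk hkn)
      · intro _
        exact ⟨node tl a tr, .refl _, ⟨tl, tr, rfl⟩, by rw [hinor]; exact List.getElem_mem hj⟩
    · rcases Nat.lt_trichotomy j l.length with hj_lt | hj_eq | hj_gt
      · -- i in r, j in l : mixed
        have hui : (l ++ a :: r)[i] = r[i - l.length - 1]'(by omega) := hgr i hi_gt hi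
        have hvj : (l ++ a :: r)[j] = l[j]'hj_lt := hgl j hj_lt hj
        constructor
        · intro hA
          exfalso
          rcases ancestor_node_iff.mp hA with ⟨he, _⟩ | h | h
          · exact har (by rw [← he, hui]; exact List.getElem_mem (by omega))
          · have := mem_left_of_ancestor h
            rw [built_inorder hbl] at this
            exact hdisj _ this (hui ▸ List.getElem_mem (by omega))
          · have := mem_right_of_ancestor h
            rw [built_inorder hbr] at this
            exact hdisj _ (hvj ▸ List.getElem_mem hj_lt) this
        · intro hR
          exfalso
          have h1 := hR.2 l.length (by omega) (by omega) (by omega)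
          rw [hgm (by omega)] at h1
          have h2 := hmin _ (hmem_ne i hi (by omega))
          omega
      · -- i in r, j = a
        subst hj_eq
        rw [hgm hj]
        have hui : (l ++ a :: r)[i] ∈ l ++ r := hmem_ne i hi (by omega)
        constructor
        · intro hA
          exfalso
          rcases ancestor_node_iff.mp hA with ⟨he, _⟩ | h | h
          · exact absurd (he ▸ hui) (by simp [hal, har])
          · exact hal (by have := mem_right_of_ancestor h; rwa [built_inorder hbl] at this)
          · exact har (by have := mem_right_of_ancestor h; rwa [built_inorder hbr] at this)
        · intro hR
          exact absurd hR.1 (not_lt.mpr (le_of_lt (hmin _ hui)))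
      · -- both in r
        have hii : i - l.length - 1 < r.length := by omega
        have hjj : j - l.length - 1 < r.length := by omega
        rw [hgr i hi_gt hi, hgr j hj_gt hj]
        have hiff : Ancestor (node tl a tr) (r[i - l.length - 1]'hii) (r[j - l.length - 1]'hjj) ↔
            Ancestor tr (r[i - l.length - 1]'hii) (r[j - l.length - 1]'hjj) := by
          rw [ancestor_node_iff]
          constructor
          · rintro (⟨he, _⟩ | h | h)
            · exact absurd (he ▸ List.getElem_mem hii) har
            · exact absurd (mem_left_of_ancestor h)
                (fun hm => hdisj _ (by rwa [built_inorder hbl] at hm) (List.getElem_mem hii))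
            · exact h
          · exact fun h => Or.inr (Or.inr h)
        rw [hiff, ihr hdr (i - l.length - 1) (j - l.length - 1) hii hjj (by omega)]
        refine and_congr_right fun _ => ⟨fun H k hk h1 h2 => ?_, fun H k hk h1 h2 => ?_⟩
        · -- from r-version to s-version
          have hkg : l.length < k := by omega
          have hkk : k - l.length - 1 < r.length := by omega
          rw [hgr k hkg hk]
          exact H (k - l.length - 1) hkk (by omega) (by omega)
        · -- from s-version to r-version
          have hk' : k + l.length + 1 < (l ++ a :: r).length := by omega
          have := H (k + l.length + 1) hk' (by omega) (by omega)
          rw [hgr (k + l.length + 1) (by omega) hk'] at this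
          rwa [getElem_idx_congr (show k + l.length + 1 - l.length - 1 = k by omega)] at this

end BTree


open BTree in
/-- In the tree built recursively from a sequence with distinct priorities by
taking the minimum-priority element as root, `u` is a proper ancestor of `v`
iff `p u < p v` and `p u` is less than the priority of every element strictly
between `u` and `v` in the sequence. -/
theorem properAncestor_iff {α : Type} (p : α → ℕ) (s : List α) (t : BTree α)
    (hdist : s.Pairwise fun x y => p x ≠ p y)
    (hb : Built p s t)
    (i j : Fin s.length) (hij : i ≠ j)
    (u v : α) (hu : s.get i = u) (hv : s.get j = v) :
    (Ancestor t u v ∧ u ≠ v) ↔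
      (p u < p v ∧ ∀ k : Fin s.length,
        min i.val j.val < k.val → k.val < max i.val j.val → p u < p (s.get k)) := by
  subst hu hv
  have hvij : i.val ≠ j.val := fun h => hij (Fin.ext h)
  have key := built_ancestor_iff p hb hdist i.val j.val i.isLt j.isLt hvij
  have hpne : p (s.get i) ≠ p (s.get j) := by
    rcases lt_or_gt_of_ne hij with h | h
    · exact List.pairwise_iff_get.mp hdist i j h
    · exact (List.pairwise_iff_get.mp hdist j i h).symm
  have hne : s.get i ≠ s.get j := fun h => hpne (congrArg p h)
  simp only [List.get_eq_getElem] at *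
  constructor
  · rintro ⟨hA, -⟩
    have h := key.mp hA
    exact ⟨h.1, fun k h1 h2 => h.2 k.val k.isLt h1 h2⟩
  · rintro ⟨h1, h2⟩
    exact ⟨key.mpr ⟨h1, fun k hk hk1 hk2 => h2 ⟨k, hk⟩ hk1 hk2⟩, hne⟩
end
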